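/- arXiv:math/0111210 — 2 statements merged into one kernel-verified Lean document; each statement's English description precedes it below -/
import Mathlib

section
/- With notation as in the previous grading setup (finite-dimensional graded sl₂-module V = ⊕_{i=0}^{2m} V_i, h acting by scalar i-m on V_i, e raising degree by 2, f lowering by 2, V₀ ≠ 0), if m ≥ 1 then the map v ↦ e^{m-1}·v is a linear isomorphism from V₁ onto V_{2m-1}. -/
open Module

lemma sl2_string_inj {V : Type*} [AddCommGroup V] [Module ℂ V] [FiniteDimensional ℂ V]
    (e f h : Module.End ℂ V)
    (hhe : h * e - e * h = (2 : ℂ) • e)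
    (hhf : h * f - f * h = (-2 : ℂ) • f)
    (hef : e * f - f * e = h)
    (hfnil : ∀ w : V, ∃ N : ℕ, (f ^ N) w = 0)
    (k : ℕ) (v : V) (hvh : h v = (-(k : ℂ)) • v) (hvk : (e ^ k) v = 0) : v = 0 := by
  classical
  -- pointwise commutation relations
  have he' : ∀ w : V, h (e w) = e (h w) + (2 : ℂ) • e w := by
    intro w
    have h1 := LinearMap.ext_iff.mp hhe w
    simp only [LinearMap.sub_apply, Module.End.mul_apply, LinearMap.smul_apply] at h1
    rw [sub_eq_iff_eq_add] at h1
    rw [h1]; module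
  have hf' : ∀ w : V, h (f w) = f (h w) - (2 : ℂ) • f w := by
    intro w
    have h1 := LinearMap.ext_iff.mp hhf w
    simp only [LinearMap.sub_apply, Module.End.mul_apply, LinearMap.smul_apply] at h1
    rw [sub_eq_iff_eq_add] at h1
    rw [h1]; module
  have hef' : ∀ w : V, e (f w) = f (e w) + h w := by
    intro w
    have h1 := LinearMap.ext_iff.mp hef w
    simp only [LinearMap.sub_apply, Module.End.mul_apply] at h1
    rw [sub_eq_iff_eq_add] at h1
    rw [h1]; module
  -- the Casimir operator
  set C : Module.End ℂ V := h * h + (2 : ℂ) • h + (4 : ℂ) • (f * e) with hCdef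
  have hC : ∀ w : V, C w = h (h w) + (2 : ℂ) • h w + (4 : ℂ) • f (e w) := by
    intro w
    simp [hCdef, LinearMap.add_apply, LinearMap.smul_apply, Module.End.mul_apply]
  have hCe : ∀ w : V, C (e w) = e (C w) := by
    intro w
    simp only [hC, he', hef', map_add, map_smul, smul_add]
    module
  have hCf : ∀ w : V, C (f w) = f (C w) := by
    intro w
    simp only [hC, hf', hef', map_add, map_smul, map_sub, smul_add, smul_sub]
    module
  have hCh : ∀ w : V, C (h w) = h (C w) := by
    intro w
    simp only [hC, he', hf', hef', map_add, map_smul, map_sub, smul_add, smul_sub]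
    module
  have hCepow : ∀ (j : ℕ) (w : V), C ((e ^ j) w) = (e ^ j) (C w) := by
    intro j
    induction j with
    | zero => intro w; simp
    | succ j ih =>
      intro w
      have h1 : (e ^ (j + 1)) w = (e ^ j) (e w) := by
        rw [pow_succ]; simp [Module.End.mul_apply]
      have h2 : (e ^ (j + 1)) (C w) = (e ^ j) (e (C w)) := by
        rw [pow_succ]; simp [Module.End.mul_apply]
      rw [h1, h2, ih (e w), hCe w]
  have hCfpow : ∀ (j : ℕ) (w : V), C ((f ^ j) w) = (f ^ j) (C w) := by
    intro j
    induction j with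
    | zero => intro w; simp
    | succ j ih =>
      intro w
      have h1 : (f ^ (j + 1)) w = (f ^ j) (f w) := by
        rw [pow_succ]; simp [Module.End.mul_apply]
      have h2 : (f ^ (j + 1)) (C w) = (f ^ j) (f (C w)) := by
        rw [pow_succ]; simp [Module.End.mul_apply]
      rw [h1, h2, ih (f w), hCf w]
  have hhE : ∀ (j : ℕ) (cc : ℂ) (w : V), h w = cc • w →
      h ((e ^ j) w) = (cc + 2 * j) • (e ^ j) w := by
    intro j
    induction j with
    | zero => intro cc w hw; simpa using hw
    | succ j ih =>
      intro cc w hw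
      have h1 : (e ^ (j + 1)) w = e ((e ^ j) w) := by
        rw [pow_succ']; simp [Module.End.mul_apply]
      rw [h1, he' ((e ^ j) w), ih cc w hw, map_smul]
      push_cast
      module
  have hhF : ∀ (j : ℕ) (cc : ℂ) (w : V), h w = cc • w →
      h ((f ^ j) w) = (cc - 2 * j) • (f ^ j) w := by
    intro j
    induction j with
    | zero => intro cc w hw; simpa using hw
    | succ j ih =>
      intro cc w hw
      have h1 : (f ^ (j + 1)) w = f ((f ^ j) w) := by
        rw [pow_succ']; simp [Module.End.mul_apply]
      rw [h1, hf' ((f ^ j) w), ih cc w hw, map_smul]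
      push_cast
      module
  -- the subspace of bad vectors
  set U : Submodule ℂ V := (Module.End.eigenspace h (-(k : ℂ))) ⊓ LinearMap.ker (e ^ k) with hUdef
  have hvU : v ∈ U := ⟨Module.End.mem_eigenspace_iff.mpr hvh, hvk⟩
  suffices hU : U = ⊥ by
    rw [hU] at hvU; simpa using hvU
  by_contra hU
  haveI : Nontrivial U := Submodule.nontrivial_iff_ne_bot.mpr hU
  have hCU : ∀ x ∈ U, C x ∈ U := by
    intro x hx
    rw [hUdef, Submodule.mem_inf] at hx
    obtain ⟨hx1, hx2⟩ := hx
    rw [Module.End.mem_eigenspace_iff] at hx1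
    rw [hUdef, Submodule.mem_inf]
    refine ⟨Module.End.mem_eigenspace_iff.mpr ?_, ?_⟩
    · rw [← hCh, hx1, map_smul]
    · have hx2' : (e ^ k) x = 0 := hx2
      show (e ^ k) (C x) = 0
      rw [← hCepow, hx2', map_zero]
  obtain ⟨c, hc⟩ := Module.End.exists_eigenvalue (C.restrict hCU)
  obtain ⟨w0, hw0⟩ := hc.exists_hasEigenvector
  set z : V := (w0 : V) with hzdef
  have hz0 : z ≠ 0 := fun hz => hw0.right (ZeroMemClass.coe_eq_zero.mp hz)
  have hzC : C z = c • z := by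
    have := hw0.apply_eq_smul
    have h2 := congrArg (Subtype.val) this
    rw [LinearMap.restrict_coe_apply] at h2
    exact h2
  have hzh : h z = (-(k : ℂ)) • z := Module.End.mem_eigenspace_iff.mp w0.2.1
  have hzk : (e ^ k) z = 0 := w0.2.2
  -- the f-string down from z
  have hex : ∃ N : ℕ, (f ^ N) z = 0 := hfnil z
  set p := Nat.find hex with hpdef
  have hp : (f ^ p) z = 0 := Nat.find_spec hex
  have hp0 : p ≠ 0 := by
    intro h0
    rw [h0] at hp; simp at hp; exact hz0 hp
  set q := p - 1 with hqdef
  have hq1 : q + 1 = p := by omega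
  set u : V := (f ^ q) z with hudef
  have hu0 : u ≠ 0 := Nat.find_min hex (by omega)
  have hfu : f u = 0 := by
    have : f ((f ^ q) z) = (f ^ (q + 1)) z := by
      rw [pow_succ']; simp [Module.End.mul_apply]
    rw [hudef, this, hq1, hp]
  set n := k + 2 * q with hndef
  have hu_h : h u = (-(n : ℂ)) • u := by
    have := hhF q (-(k : ℂ)) z hzh
    rw [← hudef] at this
    rw [this]
    congr 1
    push_cast [hndef]
    ring
  have hu_C : C u = c • u := by
    rw [hudef, hCfpow, hzC, map_smul]
  have hefu : f (e u) = (n : ℂ) • u := by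
    have h1 := hef' u
    rw [hfu, map_zero] at h1
    have h2 : f (e u) = -h u := eq_neg_of_add_eq_zero_left h1.symm
    rw [h2, hu_h]
    module
  -- compute the Casimir eigenvalue
  have hnk : k ≤ n := by omega
  have hc_val : c = (n : ℂ) * n + 2 * n := by
    have h1 := hC u
    have h2 : h (h u) = ((n : ℂ) * n) • u := by
      rw [hu_h, map_smul, hu_h, smul_smul]
      congr 1
      ring
    rw [h2, hu_h, hefu, hu_C] at h1
    have h3 : c • u = ((n : ℂ) * n + 2 * n) • u := by
      rw [h1]; module
    have h4 : (c - ((n : ℂ) * n + 2 * n)) • u = 0 := by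
      rw [sub_smul, h3, sub_self]
    rcases smul_eq_zero.mp h4 with h5 | h5
    · exact sub_eq_zero.mp h5
    · exact absurd h5 hu0
  -- downward induction: e^(k-j) z = 0 for all j ≤ k
  have key2 : ∀ j : ℕ, j ≤ k → (e ^ (k - j)) z = 0 := by
    intro j
    induction j with
    | zero => intro _; simpa using hzk
    | succ j ih =>
      intro hj
      have hj' : j ≤ k := by omega
      set t := k - (j + 1) with htdef
      have ht1 : t + 1 = k - j := by omega
      set w : V := (e ^ t) z with hwdef
      have hew : e w = 0 := by
        have h1 : e ((e ^ t) z) = (e ^ (t + 1)) z := by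
          rw [pow_succ']; simp [Module.End.mul_apply]
        rw [hwdef, h1, ht1, ih hj']
      set μ : ℂ := -(k : ℂ) + 2 * t with hmudef
      have hwh : h w = μ • w := hhE t (-(k : ℂ)) z hzh
      have hwC : C w = c • w := by
        rw [hwdef, hCepow, hzC, map_smul]
      have h1 := hC w
      have h2 : h (h w) = (μ * μ) • w := by
        rw [hwh, map_smul, hwh, smul_smul]
      rw [h2, hwh, hew, map_zero, smul_zero, add_zero, hwC] at h1
      have h3 : c • w = (μ * μ + 2 * μ) • w := by
        rw [h1]; module
      have h4 : (c - (μ * μ + 2 * μ)) • w = 0 := by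
        rw [sub_smul, h3, sub_self]
      have hfactor : c - (μ * μ + 2 * μ) = ((n : ℂ) - μ) * ((n : ℂ) + μ + 2) := by
        rw [hc_val]; ring
      have hne1 : (n : ℂ) - μ ≠ 0 := by
        have hcast : (n : ℂ) - μ = (((n : ℤ) + (k : ℤ) - 2 * (t : ℤ) : ℤ) : ℂ) := by
          rw [hmudef]; push_cast; ring
        rw [hcast]
        exact_mod_cast (by omega : ((n : ℤ) + (k : ℤ) - 2 * (t : ℤ)) ≠ 0)
      have hne2 : (n : ℂ) + μ + 2 ≠ 0 := by
        have hcast : (n : ℂ) + μ + 2 = (((n : ℤ) - (k : ℤ) + 2 * (t : ℤ) + 2 : ℤ) : ℂ) := by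
          rw [hmudef]; push_cast; ring
        rw [hcast]
        exact_mod_cast (by omega : ((n : ℤ) - (k : ℤ) + 2 * (t : ℤ) + 2) ≠ 0)
      have h5 : c - (μ * μ + 2 * μ) ≠ 0 := by
        rw [hfactor]; exact mul_ne_zero hne1 hne2
      rcases smul_eq_zero.mp h4 with h6 | h6
      · exact absurd h6 h5
      · exact h6
  have hfin := key2 k le_rfl
  simp at hfin
  exact absurd hfin hz0


/-- Remarque 5.7(1), abstract form: in the graded sl₂-module `V = ⊕_{i=0}^{2m} V_i`,
if `m ≥ 1` then `v ↦ e^{m-1} v` is an isomorphism `V₁ ≃ V_{2m-1}`. -/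
theorem stmt6 {V : Type*} [AddCommGroup V] [Module ℂ V] [FiniteDimensional ℂ V]
    (e f h : Module.End ℂ V) (m : ℕ) (hm : 1 ≤ m)
    (Vsub : ℤ → Submodule ℂ V)
    (hinternal : DirectSum.IsInternal Vsub)
    (hsupp : ∀ i : ℤ, i < 0 ∨ 2 * (m : ℤ) < i → Vsub i = ⊥)
    (h0 : Vsub 0 ≠ ⊥)
    (hhe : h * e - e * h = (2 : ℂ) • e)
    (hhf : h * f - f * h = (-2 : ℂ) • f)
    (hef : e * f - f * e = h)
    (he : ∀ (i : ℤ), ∀ x ∈ Vsub i, e x ∈ Vsub (i + 2))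
    (hf : ∀ (i : ℤ), ∀ x ∈ Vsub i, f x ∈ Vsub (i - 2))
    (hh : ∀ (i : ℤ), ∀ x ∈ Vsub i, h x = ((i : ℂ) - (m : ℂ)) • x) :
    ∃ φ : Vsub 1 ≃ₗ[ℂ] Vsub (2 * (m : ℤ) - 1),
      ∀ x : Vsub 1, (φ x : V) = (e ^ (m - 1)) (x : V) := by
  classical
  -- iterated grading shifts
  have hepow : ∀ (j : ℕ) (i : ℤ), ∀ x ∈ Vsub i, (e ^ j) x ∈ Vsub (i + 2 * j) := by
    intro j
    induction j with
    | zero => intro i x hx; simpa using hx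
    | succ j ih =>
      intro i x hx
      have h1 := he _ _ (ih i x hx)
      have h2 : (e ^ (j + 1)) x = e ((e ^ j) x) := by
        rw [pow_succ']; simp [Module.End.mul_apply]
      rw [h2]
      convert h1 using 2
      push_cast; ring
  have hfpow : ∀ (j : ℕ) (i : ℤ), ∀ x ∈ Vsub i, (f ^ j) x ∈ Vsub (i - 2 * j) := by
    intro j
    induction j with
    | zero => intro i x hx; simpa using hx
    | succ j ih =>
      intro i x hx
      have h1 := hf _ _ (ih i x hx)
      have h2 : (f ^ (j + 1)) x = f ((f ^ j) x) := by
        rw [pow_succ']; simp [Module.End.mul_apply]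
      rw [h2]
      convert h1 using 2
      push_cast; ring
  -- nilpotency
  have hetop : ∀ x : V, (e ^ (m + 1)) x = 0 := by
    have hle : ∀ i : ℤ, Vsub i ≤ LinearMap.ker ((e : Module.End ℂ V) ^ (m + 1)) := by
      intro i x hx
      rcases lt_or_ge i 0 with hi | hi
      · have hbot : Vsub i = ⊥ := hsupp i (Or.inl hi)
        rw [hbot] at hx
        simp only [Submodule.mem_bot] at hx
        simp [LinearMap.mem_ker, hx]
      · have h1 := hepow (m + 1) i x hx
        have h2 : Vsub (i + 2 * ((m + 1 : ℕ) : ℤ)) = ⊥ := by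
          apply hsupp
          right
          push_cast
          omega
        rw [h2] at h1
        simpa [LinearMap.mem_ker] using h1
    intro x
    have hx : x ∈ (⊤ : Submodule ℂ V) := trivial
    rw [← hinternal.submodule_iSup_eq_top] at hx
    have := (iSup_le hle) hx
    simpa [LinearMap.mem_ker] using this
  have hftop : ∀ x : V, (f ^ (m + 1)) x = 0 := by
    have hle : ∀ i : ℤ, Vsub i ≤ LinearMap.ker ((f : Module.End ℂ V) ^ (m + 1)) := by
      intro i x hx
      rcases lt_or_ge (2 * (m : ℤ)) i with hi | hi
      · have hbot : Vsub i = ⊥ := hsupp i (Or.inr hi)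
        rw [hbot] at hx
        simp only [Submodule.mem_bot] at hx
        simp [LinearMap.mem_ker, hx]
      · have h1 := hfpow (m + 1) i x hx
        have h2 : Vsub (i - 2 * ((m + 1 : ℕ) : ℤ)) = ⊥ := by
          apply hsupp
          left
          push_cast
          omega
        rw [h2] at h1
        simpa [LinearMap.mem_ker] using h1
    intro x
    have hx : x ∈ (⊤ : Submodule ℂ V) := trivial
    rw [← hinternal.submodule_iSup_eq_top] at hx
    have := (iSup_le hle) hx
    simpa [LinearMap.mem_ker] using this
  set k := m - 1 with hkdef
  have hkc : ((k : ℕ) : ℂ) = (m : ℂ) - 1 := by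
    have : ((k : ℕ) : ℂ) = ((m : ℂ) - 1) := by
      rw [hkdef]
      push_cast [Nat.cast_sub hm]
      ring
    exact this
  -- injectivity of e^k on Vsub 1
  have hEinj : ∀ x ∈ Vsub 1, (e ^ k) x = 0 → x = 0 := by
    intro x hx hx0
    refine sl2_string_inj e f h hhe hhf hef (fun w => ⟨m + 1, hftop w⟩) k x ?_ hx0
    rw [hh 1 x hx]
    congr 1
    rw [hkc]
    push_cast
    ring
  -- injectivity of f^k on Vsub (2m-1), via the flipped sl₂-triple (f, e, -h)
  have r1 : (-h) * f - f * (-h) = (2 : ℂ) • f := by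
    have h1 : (-h) * f - f * (-h) = -(h * f - f * h) := by noncomm_ring
    rw [h1, hhf]
    module
  have r2 : (-h) * e - e * (-h) = (-2 : ℂ) • e := by
    have h1 : (-h) * e - e * (-h) = -(h * e - e * h) := by noncomm_ring
    rw [h1, hhe]
    module
  have r3 : f * e - e * f = -h := by
    have h1 : f * e - e * f = -(e * f - f * e) := by noncomm_ring
    rw [h1, hef]
  have hFinj : ∀ x ∈ Vsub (2 * (m : ℤ) - 1), (f ^ k) x = 0 → x = 0 := by
    intro x hx hx0
    refine sl2_string_inj f e (-h) r1 r2 r3 (fun w => ⟨m + 1, hetop w⟩) k x ?_ hx0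
    have h1 := hh _ x hx
    rw [LinearMap.neg_apply, h1, hkc]
    push_cast
    module
  -- the maps between the graded pieces
  have hmapsE : ∀ x ∈ Vsub 1, (e ^ k) x ∈ Vsub (2 * (m : ℤ) - 1) := by
    intro x hx
    have h1 := hepow k 1 x hx
    have h2 : (1 : ℤ) + 2 * ((k : ℕ) : ℤ) = 2 * (m : ℤ) - 1 := by
      rw [hkdef]
      push_cast [Nat.cast_sub hm]
      ring
    rwa [h2] at h1
  have hmapsF : ∀ x ∈ Vsub (2 * (m : ℤ) - 1), (f ^ k) x ∈ Vsub 1 := by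
    intro x hx
    have h1 := hfpow k _ x hx
    have h2 : (2 * (m : ℤ) - 1) - 2 * ((k : ℕ) : ℤ) = 1 := by
      rw [hkdef]
      push_cast [Nat.cast_sub hm]
      ring
    rwa [h2] at h1
  set E : (Vsub 1) →ₗ[ℂ] (Vsub (2 * (m : ℤ) - 1)) := LinearMap.restrict (e ^ k) hmapsE with hEdef
  set F : (Vsub (2 * (m : ℤ) - 1)) →ₗ[ℂ] (Vsub 1) := LinearMap.restrict (f ^ k) hmapsF with hFdef
  have hEinj' : Function.Injective E := by
    rw [← LinearMap.ker_eq_bot]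
    rw [LinearMap.ker_eq_bot']
    intro x hx
    have h1 : ((E x : Vsub (2 * (m : ℤ) - 1)) : V) = (e ^ k) (x : V) :=
      LinearMap.restrict_coe_apply _ _ _
    rw [hx] at h1
    have h2 : (e ^ k) (x : V) = 0 := by
      rw [← h1]; simp
    have h3 := hEinj (x : V) x.2 h2
    exact Subtype.ext h3
  have hFinj' : Function.Injective F := by
    rw [← LinearMap.ker_eq_bot]
    rw [LinearMap.ker_eq_bot']
    intro x hx
    have h1 : ((F x : Vsub 1) : V) = (f ^ k) (x : V) :=
      LinearMap.restrict_coe_apply _ _ _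
    rw [hx] at h1
    have h2 : (f ^ k) (x : V) = 0 := by
      rw [← h1]; simp
    have h3 := hFinj (x : V) x.2 h2
    exact Subtype.ext h3
  have hdim : Module.finrank ℂ (Vsub 1) = Module.finrank ℂ (Vsub (2 * (m : ℤ) - 1)) :=
    le_antisymm (LinearMap.finrank_le_finrank_of_injective hEinj')
      (LinearMap.finrank_le_finrank_of_injective hFinj')
  refine ⟨LinearMap.linearEquivOfInjective E hEinj' hdim, fun x => ?_⟩
  rw [LinearMap.linearEquivOfInjective_apply]
  exact LinearMap.restrict_coe_apply _ _ _
end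

section
/- Define P_{n,r} over the field ℚ(k₁,ℏ) by the B₂-recurrence P_{n+1,r} = -2r(2k₁+2r-1)P_{n,r-1} - (n+1-2r)(ℏ+n+2r)P_{n,r} (P_{0,0}=1, P_{n,-1}=0). Then P_{n,r} is divisible by ∏_{i=1}^{r}(2k₁+2i-1) in ℚ[k₁,ℏ], and P_{n,0} = (-1)^n n! ∏_{j=0}^{n-1}(ℏ+j). -/
open MvPolynomial Finset

/-- Type B₂, partial Assertion 6.6: `∏_{i=1}^r (2k₁+2i-1)` divides `P_{n,r}` and
`P_{n,0} = (-1)^n n! ∏_{j=0}^{n-1}(ℏ+j)`, where `k₁ = X 0` and `ℏ = X 1`. -/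
theorem stmt18 (P : ℕ → ℤ → MvPolynomial (Fin 2) ℚ)
    (hP00 : P 0 0 = 1)
    (hP0r : ∀ r : ℤ, r ≠ 0 → P 0 r = 0)
    (hPm1 : ∀ n : ℕ, P n (-1) = 0)
    (hrec : ∀ (n : ℕ) (r : ℤ), P (n + 1) r =
      -(C (2 * (r : ℚ)) * (2 * X 0 + C (2 * (r : ℚ) - 1))) * P n (r - 1)
        - C ((n : ℚ) + 1 - 2 * r) * (X 1 + C ((n : ℚ) + 2 * r)) * P n r) :
    (∀ n r : ℕ, (∏ i ∈ range r, (2 * X 0 + C (2 * (i : ℚ) + 1))) ∣ P n (r : ℤ)) ∧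
    (∀ n : ℕ, P n 0 = C ((-1 : ℚ) ^ n * (Nat.factorial n : ℚ)) *
      ∏ j ∈ range n, (X 1 + C (j : ℚ))) := by
  constructor
  · intro n
    induction n with
    | zero =>
      intro r
      rcases Nat.eq_zero_or_pos r with h | h
      · subst h; simp [hP00]
      · rw [hP0r _ (by exact_mod_cast h.ne')]
        exact dvd_zero _
    | succ n ih =>
      intro r
      rw [hrec]
      rcases r with _ | s
      · push_cast
        simp only [mul_zero, zero_sub, zero_mul, neg_zero, map_zero, zero_mul,
          neg_zero, zero_sub]
        have := hPm1 n
        norm_num [this]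
      · have hs : ((s : ℤ) + 1) - 1 = (s : ℤ) := by ring
        push_cast
        rw [hs]
        apply dvd_sub
        · rw [prod_range_succ]
          have : (2 * X 0 + C (2 * ((s:ℚ)) + 1)) ∣ P n (s : ℤ) *
              (2 * X 0 + C (2 * ((s:ℚ)) + 1)) := Dvd.intro_left _ rfl
          have hfac : (2 * ((s : ℚ) + 1) - 1) = 2 * (s : ℚ) + 1 := by ring
          rw [hfac]
          obtain ⟨q, hq⟩ := ih s
          exact ⟨-(C (2 * ((s : ℚ) + 1))) * q, by rw [hq]; ring⟩
        · exact Dvd.dvd.mul_left (ih (s + 1)) _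
  · intro n
    induction n with
    | zero => simp [hP00]
    | succ n ih =>
      have h := hrec n 0
      push_cast at h
      simp only [mul_zero, add_zero, sub_zero, zero_sub] at h
      rw [h, hPm1, ih, prod_range_succ, Nat.factorial_succ]
      push_cast
      simp only [C_mul, C_add, C_neg, C_sub, C_1, map_pow]
      ring
end
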